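/- arXiv:1203.0730 — 2 statements merged into one kernel-verified Lean document; each statement's English description precedes it below -/
import Mathlib

section
/- High-probability set of good conditioning points: let p_X, q_X be pmfs on a countable alphabet 𝒳 and let p_{Y|X}, q_{Y|X} be conditional pmfs from 𝒳 to a countable alphabet 𝒴 with ‖p_X p_{Y|X} − q_X q_{Y|X}‖ ≤ ε for some ε > 0. Then the set A := {x ∈ 𝒳 : ‖p_{Y|X=x} − q_{Y|X=x}‖ ≤ √ε} has probability at least 1 − 2√ε under both p_X and q_X. -/
open scoped BigOperators

noncomputable section

/-- `p` is a probability mass function on `α`: nonnegative and summing to one. -/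
def IsPmf {α : Type*} (p : α → ℝ) : Prop := (∀ a, 0 ≤ p a) ∧ HasSum p 1

/-- Total variation distance between two pmfs on the same alphabet:
`‖p − q‖ = (1/2) Σ |p − q|`. -/
def TV {α : Type*} (p q : α → ℝ) : ℝ := (1 / 2) * ∑' a, |p a - q a|

/-- Markov-type inequality for pmfs. -/
lemma markov_aux {𝒳 : Type*} (r T : 𝒳 → ℝ) (hr : IsPmf r) (hT : ∀ x, 0 ≤ T x)
    (hsumm : Summable fun x => r x * T x) (s c : ℝ) (hs : 0 < s)
    (hc : ∑' x, r x * T x ≤ c) :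
    1 - c / s ≤ ∑' x : {x : 𝒳 // T x ≤ s}, r x := by
  have hrs : Summable r := hr.2.summable
  set A : Set 𝒳 := {x | T x ≤ s} with hA
  have hsplit : (∑' x : A, r x) + ∑' x : ↥Aᶜ, r x = 1 := by
    rw [Summable.tsum_add_tsum_compl (s := A) (hrs.subtype A) (hrs.subtype Aᶜ), hr.2.tsum_eq]
  have h1 : s * ∑' x : ↥Aᶜ, r x ≤ c := by
    have e1 : s * ∑' x : ↥Aᶜ, r x = ∑' x : ↥Aᶜ, s * r x := (tsum_mul_left).symm
    have e2 : (∑' x : ↥Aᶜ, s * r x) ≤ ∑' x : ↥Aᶜ, r ↑x * T ↑x := by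
      refine Summable.tsum_le_tsum (fun x => ?_) ((hrs.mul_left s).subtype Aᶜ) (hsumm.subtype Aᶜ)
      have hx : s < T x := by
        have := x.2
        simp only [hA, Set.mem_compl_iff, Set.mem_setOf_eq, not_le] at this
        exact this
      calc s * r ↑x ≤ T ↑x * r ↑x := mul_le_mul_of_nonneg_right hx.le (hr.1 _)
        _ = r ↑x * T ↑x := mul_comm _ _
    have e3 : (∑' x : ↥Aᶜ, r ↑x * T ↑x) ≤ ∑' x, r x * T x := by
      rw [tsum_subtype Aᶜ (fun x => r x * T x)]
      refine Summable.tsum_le_tsum (fun x => ?_) (hsumm.indicator _) hsumm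
      exact Set.indicator_le_self' (fun x _ => mul_nonneg (hr.1 x) (hT x)) x
    calc s * ∑' x : ↥Aᶜ, r x = ∑' x : ↥Aᶜ, s * r x := e1
      _ ≤ ∑' x : ↥Aᶜ, r ↑x * T ↑x := e2
      _ ≤ ∑' x, r x * T x := e3
      _ ≤ c := hc
  have h2 : (∑' x : ↥Aᶜ, r x) ≤ c / s := by
    rw [le_div_iff₀ hs]
    linarith [h1]
  have : (∑' x : A, r x) = (∑' x : {x : 𝒳 // T x ≤ s}, r x) := rfl
  linarith [hsplit, h2, this.symm]

/-- High-probability set of good conditioning points.  If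
`‖p_X p_{Y|X} − q_X q_{Y|X}‖ ≤ ε` (for `ε > 0`), then the set
`A = {x : ‖p_{Y|X=x} − q_{Y|X=x}‖ ≤ √ε}` has probability at least `1 − 2√ε` under both
`p_X` and `q_X`. -/
theorem good_conditioning_set_high_probability {𝒳 𝒴 : Type*} [Countable 𝒳] [Countable 𝒴]
    (pX qX : 𝒳 → ℝ) (W V : 𝒳 → 𝒴 → ℝ)
    (hpX : IsPmf pX) (hqX : IsPmf qX) (hW : ∀ x, IsPmf (W x)) (hV : ∀ x, IsPmf (V x))
    (ε : ℝ) (hε : 0 < ε)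
    (h : TV (fun a : 𝒳 × 𝒴 => pX a.1 * W a.1 a.2) (fun a : 𝒳 × 𝒴 => qX a.1 * V a.1 a.2) ≤ ε) :
    1 - 2 * Real.sqrt ε ≤ (∑' x : {x : 𝒳 // TV (W x) (V x) ≤ Real.sqrt ε}, pX x) ∧
      1 - 2 * Real.sqrt ε ≤ (∑' x : {x : 𝒳 // TV (W x) (V x) ≤ Real.sqrt ε}, qX x) := by
  set s := Real.sqrt ε with hs_def
  have hs : 0 < s := Real.sqrt_pos.mpr hε
  -- the joint functions
  set g : 𝒳 × 𝒴 → ℝ := fun a => |pX a.1 * W a.1 a.2 - qX a.1 * V a.1 a.2| with hg_def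
  -- summability of the two joint pmfs
  have hjp : Summable fun a : 𝒳 × 𝒴 => pX a.1 * W a.1 a.2 := by
    rw [summable_prod_of_nonneg (fun a => mul_nonneg (hpX.1 a.1) ((hW a.1).1 a.2))]
    constructor
    · intro x; exact ((hW x).2.summable).mul_left (pX x)
    · have : (fun x => ∑' y, pX x * W x y) = pX := by
        funext x
        rw [tsum_mul_left, (hW x).2.tsum_eq, mul_one]
      rw [this]; exact hpX.2.summable
  have hjq : Summable fun a : 𝒳 × 𝒴 => qX a.1 * V a.1 a.2 := by
    rw [summable_prod_of_nonneg (fun a => mul_nonneg (hqX.1 a.1) ((hV a.1).1 a.2))]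
    constructor
    · intro x; exact ((hV x).2.summable).mul_left (qX x)
    · have : (fun x => ∑' y, qX x * V x y) = qX := by
        funext x
        rw [tsum_mul_left, (hV x).2.tsum_eq, mul_one]
      rw [this]; exact hqX.2.summable
  have hg_sum : Summable g := by
    apply Summable.of_nonneg_of_le (fun a => abs_nonneg _) (fun a => ?_) (hjp.add hjq)
    calc g a ≤ |pX a.1 * W a.1 a.2| + |qX a.1 * V a.1 a.2| := abs_sub _ _
      _ = pX a.1 * W a.1 a.2 + qX a.1 * V a.1 a.2 := by
          rw [abs_of_nonneg (mul_nonneg (hpX.1 a.1) ((hW a.1).1 a.2)),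
            abs_of_nonneg (mul_nonneg (hqX.1 a.1) ((hV a.1).1 a.2))]
  -- D x : fiberwise L1 distance
  set D : 𝒳 → ℝ := fun x => ∑' y, g (x, y) with hD_def
  have hD_nonneg : ∀ x, 0 ≤ D x := fun x => tsum_nonneg (fun y => abs_nonneg _)
  have hg_slice : ∀ x, Summable fun y => g (x, y) := hg_sum.prod_factor
  have hD_tsum : ∑' x, D x = ∑' a, g a := (Summable.tsum_prod' hg_sum hg_slice).symm
  have hD_summ : Summable D := by
    apply Summable.of_nonneg_of_le hD_nonneg (fun x => ?_) (hpX.2.summable.add hqX.2.summable)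
    calc D x ≤ ∑' y, (pX x * W x y + qX x * V x y) := by
          refine Summable.tsum_le_tsum (fun y => ?_) (hg_slice x)
            ((((hW x).2.summable).mul_left (pX x)).add (((hV x).2.summable).mul_left (qX x)))
          calc g (x, y) ≤ |pX x * W x y| + |qX x * V x y| := abs_sub _ _
            _ = pX x * W x y + qX x * V x y := by
                rw [abs_of_nonneg (mul_nonneg (hpX.1 x) ((hW x).1 y)),
                  abs_of_nonneg (mul_nonneg (hqX.1 x) ((hV x).1 y))]
      _ = pX x + qX x := by
          rw [Summable.tsum_add (((hW x).2.summable).mul_left (pX x)) (((hV x).2.summable).mul_left (qX x)),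
            tsum_mul_left, tsum_mul_left, (hW x).2.tsum_eq, (hV x).2.tsum_eq, mul_one, mul_one]
  -- total D bound : ∑ D ≤ 2 ε
  have hD_le : ∑' x, D x ≤ 2 * ε := by
    rw [hD_tsum]
    have : TV (fun a : 𝒳 × 𝒴 => pX a.1 * W a.1 a.2) (fun a : 𝒳 × 𝒴 => qX a.1 * V a.1 a.2)
        = (1/2) * ∑' a, g a := rfl
    rw [this] at h
    linarith
  -- |pX x - qX x| ≤ D x
  have habs : ∀ x, |pX x - qX x| ≤ D x := by
    intro x
    have h1 : HasSum (fun y => pX x * W x y) (pX x) := by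
      have := (hW x).2.mul_left (pX x)
      simpa using this
    have h2 : HasSum (fun y => qX x * V x y) (qX x) := by
      have := (hV x).2.mul_left (qX x)
      simpa using this
    have h3 : HasSum (fun y => pX x * W x y - qX x * V x y) (pX x - qX x) := h1.sub h2
    calc |pX x - qX x| = |∑' y, (pX x * W x y - qX x * V x y)| := by rw [h3.tsum_eq]
      _ ≤ ∑' y, |pX x * W x y - qX x * V x y| := by
          have hn : Summable fun y => ‖pX x * W x y - qX x * V x y‖ := by
            simpa [Real.norm_eq_abs] using hg_slice x
          calc |∑' y, (pX x * W x y - qX x * V x y)|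
              = ‖∑' y, (pX x * W x y - qX x * V x y)‖ := (Real.norm_eq_abs _).symm
            _ ≤ ∑' y, ‖pX x * W x y - qX x * V x y‖ := norm_tsum_le_tsum_norm hn
            _ = ∑' y, |pX x * W x y - qX x * V x y| := by simp [Real.norm_eq_abs]
      _ = D x := rfl
  -- key bounds: pX x * TV (W x) (V x) ≤ D x and similarly for qX
  have hTV_nonneg : ∀ x, 0 ≤ TV (W x) (V x) := fun x =>
    mul_nonneg (by norm_num) (tsum_nonneg (fun y => abs_nonneg _))
  have hkey : ∀ (r : 𝒳 → ℝ) (U : 𝒳 → 𝒴 → ℝ), IsPmf r → (∀ x, IsPmf (U x)) →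
      (∀ x y, |r x * U x y - pX x * W x y| ≤ g (x, y) ∨
        |r x * U x y - qX x * V x y| ≤ g (x, y)) → True := fun _ _ _ _ _ => trivial
  -- 2 * pX x * TV (W x) (V x) ≤ 2 * D x
  have hp_bound : ∀ x, pX x * TV (W x) (V x) ≤ D x := by
    intro x
    have hWV : Summable fun y => |W x y - V x y| := by
      apply Summable.of_nonneg_of_le (fun y => abs_nonneg _) (fun y => ?_)
        (((hW x).2.summable).add ((hV x).2.summable))
      calc |W x y - V x y| ≤ |W x y| + |V x y| := abs_sub _ _
        _ = W x y + V x y := by rw [abs_of_nonneg ((hW x).1 y), abs_of_nonneg ((hV x).1 y)]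
    have e1 : 2 * (pX x * TV (W x) (V x)) = ∑' y, pX x * |W x y - V x y| := by
      rw [tsum_mul_left]
      unfold TV
      ring
    have e2 : (∑' y, pX x * |W x y - V x y|) ≤ ∑' y, (g (x, y) + |pX x - qX x| * V x y) := by
      refine Summable.tsum_le_tsum (fun y => ?_) (hWV.mul_left (pX x))
        ((hg_slice x).add (((hV x).2.summable).mul_left _))
      have : pX x * |W x y - V x y| = |pX x * W x y - pX x * V x y| := by
        rw [← mul_sub, abs_mul, abs_of_nonneg (hpX.1 x)]
      rw [this]
      calc |pX x * W x y - pX x * V x y|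
          ≤ |pX x * W x y - qX x * V x y| + |qX x * V x y - pX x * V x y| := abs_sub_le _ _ _
        _ = g (x, y) + |pX x - qX x| * V x y := by
            congr 1
            rw [← sub_mul, abs_mul, abs_of_nonneg ((hV x).1 y), abs_sub_comm]
    have e3 : (∑' y, (g (x, y) + |pX x - qX x| * V x y)) = D x + |pX x - qX x| := by
      rw [Summable.tsum_add (hg_slice x) (((hV x).2.summable).mul_left _), tsum_mul_left,
        (hV x).2.tsum_eq, mul_one]
    have := habs x
    linarith [e1 ▸ (e2.trans_eq e3)]
  have hq_bound : ∀ x, qX x * TV (W x) (V x) ≤ D x := by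
    intro x
    have hWV : Summable fun y => |W x y - V x y| := by
      apply Summable.of_nonneg_of_le (fun y => abs_nonneg _) (fun y => ?_)
        (((hW x).2.summable).add ((hV x).2.summable))
      calc |W x y - V x y| ≤ |W x y| + |V x y| := abs_sub _ _
        _ = W x y + V x y := by rw [abs_of_nonneg ((hW x).1 y), abs_of_nonneg ((hV x).1 y)]
    have e1 : 2 * (qX x * TV (W x) (V x)) = ∑' y, qX x * |W x y - V x y| := by
      rw [tsum_mul_left]
      unfold TV
      ring
    have e2 : (∑' y, qX x * |W x y - V x y|) ≤ ∑' y, (|pX x - qX x| * W x y + g (x, y)) := by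
      refine Summable.tsum_le_tsum (fun y => ?_) (hWV.mul_left (qX x))
        (((((hW x).2.summable).mul_left _)).add (hg_slice x))
      have : qX x * |W x y - V x y| = |qX x * W x y - qX x * V x y| := by
        rw [← mul_sub, abs_mul, abs_of_nonneg (hqX.1 x)]
      rw [this]
      calc |qX x * W x y - qX x * V x y|
          ≤ |qX x * W x y - pX x * W x y| + |pX x * W x y - qX x * V x y| := abs_sub_le _ _ _
        _ = |pX x - qX x| * W x y + g (x, y) := by
            congr 1
            rw [← sub_mul, abs_mul, abs_of_nonneg ((hW x).1 y), abs_sub_comm]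
    have e3 : (∑' y, (|pX x - qX x| * W x y + g (x, y))) = |pX x - qX x| + D x := by
      rw [Summable.tsum_add (((hW x).2.summable).mul_left _) (hg_slice x), tsum_mul_left,
        (hW x).2.tsum_eq, mul_one]
    have := habs x
    linarith [e1 ▸ (e2.trans_eq e3)]
  -- summability and tsum bound for r x * TV
  have hsum_p : Summable fun x => pX x * TV (W x) (V x) :=
    Summable.of_nonneg_of_le (fun x => mul_nonneg (hpX.1 x) (hTV_nonneg x)) hp_bound hD_summ
  have hsum_q : Summable fun x => qX x * TV (W x) (V x) :=
    Summable.of_nonneg_of_le (fun x => mul_nonneg (hqX.1 x) (hTV_nonneg x)) hq_bound hD_summ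
  have htp : (∑' x, pX x * TV (W x) (V x)) ≤ 2 * ε :=
    le_trans (Summable.tsum_le_tsum hp_bound hsum_p hD_summ) hD_le
  have htq : (∑' x, qX x * TV (W x) (V x)) ≤ 2 * ε :=
    le_trans (Summable.tsum_le_tsum hq_bound hsum_q hD_summ) hD_le
  have hdiv : (2 * ε) / s = 2 * s := by
    rw [hs_def]
    rw [eq_comm, eq_div_iff (ne_of_gt hs)]
    rw [hs_def]
    rw [mul_assoc, Real.mul_self_sqrt hε.le]
  constructor
  · have := markov_aux pX (fun x => TV (W x) (V x)) hpX hTV_nonneg hsum_p s (2 * ε) hs htp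
    rwa [hdiv] at this
  · have := markov_aux qX (fun x => TV (W x) (V x)) hqX hTV_nonneg hsum_q s (2 * ε) hs htq
    rwa [hdiv] at this
end
end

section
/- Existence of good conditioning sequences (asymptotic version): let 𝒳^{(n)} and 𝒴^{(n)} be arbitrary countable sets, let p^{(n)}, q^{(n)} be pmfs on 𝒳^{(n)}, and let k^{(n)}, l^{(n)} be conditional pmfs from 𝒳^{(n)} to 𝒴^{(n)}. If ‖p^{(n)} k^{(n)} − q^{(n)} l^{(n)}‖ → 0 as n → ∞ (total variation of the joint pmfs), then there exists a sequence x^{(n)} ∈ 𝒳^{(n)} with p^{(n)}(x^{(n)}) > 0 such that ‖k^{(n)}(· | x^{(n)}) − l^{(n)}(· | x^{(n)})‖ → 0. -/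
open Filter
open scoped BigOperators Topology

noncomputable section

section Aux

variable {α β : Type*}

lemma tv_nonneg (p q : α → ℝ) : 0 ≤ TV p q :=
  mul_nonneg (by norm_num) (tsum_nonneg fun a => abs_nonneg _)

lemma summable_abs_sub {p q : α → ℝ} (hp : IsPmf p) (hq : IsPmf q) :
    Summable fun a => |p a - q a| := by
  refine (hp.2.summable.add hq.2.summable).of_nonneg_of_le (fun a => abs_nonneg _)
    (fun a => (abs_sub _ _).trans ?_)
  rw [abs_of_nonneg (hp.1 a), abs_of_nonneg (hq.1 a)]

lemma tv_le_one {p q : α → ℝ} (hp : IsPmf p) (hq : IsPmf q) : TV p q ≤ 1 := by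
  have h1 : ∑' a, |p a - q a| ≤ ∑' a, (p a + q a) := by
    refine Summable.tsum_le_tsum (fun a => (abs_sub _ _).trans ?_) (summable_abs_sub hp hq)
      (hp.2.summable.add hq.2.summable)
    rw [abs_of_nonneg (hp.1 a), abs_of_nonneg (hq.1 a)]
  have h2 : ∑' a, (p a + q a) = 2 := by
    rw [Summable.tsum_add hp.2.summable hq.2.summable, hp.2.tsum_eq, hq.2.tsum_eq]; norm_num
  rw [TV]
  nlinarith [h1, h2]

lemma isPmf_joint {p : α → ℝ} {k : α → β → ℝ} (hp : IsPmf p) (hk : ∀ x, IsPmf (k x)) :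
    IsPmf (fun a : α × β => p a.1 * k a.1 a.2) := by
  have hnn : ∀ a : α × β, 0 ≤ p a.1 * k a.1 a.2 :=
    fun a => mul_nonneg (hp.1 a.1) ((hk a.1).1 a.2)
  have hsum : ∀ x : α, (∑' y, p x * k x y) = p x := by
    intro x
    rw [tsum_mul_left, (hk x).2.tsum_eq, mul_one]
  have hs : Summable fun a : α × β => p a.1 * k a.1 a.2 := by
    refine (summable_prod_of_nonneg hnn).mpr ⟨fun x => ((hk x).2.summable).mul_left (p x), ?_⟩
    simpa only [hsum] using hp.2.summable
  refine ⟨hnn, hs.hasSum_iff.mpr ?_⟩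
  rw [Summable.tsum_prod' hs fun x => ((hk x).2.summable).mul_left (p x)]
  simp only [hsum, hp.2.tsum_eq]

/-- The key single-`n` lemma. -/
lemma exists_good_point (p q : α → ℝ) (k l : α → β → ℝ)
    (hp : IsPmf p) (hq : IsPmf q) (hk : ∀ x, IsPmf (k x)) (hl : ∀ x, IsPmf (l x)) :
    ∃ x, 0 < p x ∧ TV (k x) (l x) ≤
      2 * TV (fun a : α × β => p a.1 * k a.1 a.2) (fun a : α × β => q a.1 * l a.1 a.2) := by
  set ε := TV (fun a : α × β => p a.1 * k a.1 a.2) (fun a : α × β => q a.1 * l a.1 a.2) with hε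
  have hpk := isPmf_joint hp hk
  have hql := isPmf_joint hq hl
  have hpl := isPmf_joint hp hl
  have hεnn : 0 ≤ ε := tv_nonneg _ _
  -- summability of the joint absolute differences
  have hS1 : Summable fun a : α × β => |p a.1 * k a.1 a.2 - q a.1 * l a.1 a.2| :=
    summable_abs_sub hpk hql
  have hS2 : Summable fun a : α × β => |q a.1 * l a.1 a.2 - p a.1 * l a.1 a.2| :=
    summable_abs_sub hql hpl
  have hS3 : Summable fun a : α × β => |p a.1 * k a.1 a.2 - p a.1 * l a.1 a.2| :=
    summable_abs_sub hpk hpl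
  -- Step A : TV q p ≤ ε
  have stepA : TV q p ≤ ε := by
    rw [TV, hε, TV]
    have hmono : (1:ℝ)/2 ≥ 0 := by norm_num
    apply mul_le_mul_of_nonneg_left _ hmono
    have hinner : ∀ x : α, |q x - p x| ≤ ∑' y, |q x * l x y - p x * k x y| := by
      intro x
      have hsub : Summable fun y => q x * l x y - p x * k x y :=
        (((hl x).2.summable).mul_left (q x)).sub (((hk x).2.summable).mul_left (p x))
      have : q x - p x = ∑' y, (q x * l x y - p x * k x y) := by
        rw [Summable.tsum_sub (((hl x).2.summable).mul_left (q x)) (((hk x).2.summable).mul_left (p x)),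
          tsum_mul_left, tsum_mul_left, (hl x).2.tsum_eq, (hk x).2.tsum_eq, mul_one, mul_one]
      rw [this]
      have habs : Summable fun y => |q x * l x y - p x * k x y| := by
        simpa using hsub.abs
      simpa [Real.norm_eq_abs] using norm_tsum_le_tsum_norm (f := fun y => q x * l x y - p x * k x y) (by simpa [Real.norm_eq_abs] using habs)
    have habs : (fun a : α × β => |q a.1 * l a.1 a.2 - p a.1 * k a.1 a.2|)
        = fun a : α × β => |p a.1 * k a.1 a.2 - q a.1 * l a.1 a.2| := by
      funext a; rw [abs_sub_comm]
    have hS1' : Summable fun a : α × β => |q a.1 * l a.1 a.2 - p a.1 * k a.1 a.2| := by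
      rw [habs]; exact hS1
    have hfac := (summable_prod_of_nonneg (fun a : α × β => abs_nonneg _)).mp hS1'
    calc ∑' x, |q x - p x| ≤ ∑' x, ∑' y, |q x * l x y - p x * k x y| :=
          Summable.tsum_le_tsum hinner (summable_abs_sub hq hp) hfac.2
      _ = ∑' a : α × β, |q a.1 * l a.1 a.2 - p a.1 * k a.1 a.2| :=
          (Summable.tsum_prod' hS1' hfac.1).symm
      _ = ∑' a : α × β, |p a.1 * k a.1 a.2 - q a.1 * l a.1 a.2| := by rw [habs]
  -- Step B :  ∑' x, p x * TV (k x) (l x) ≤ 2 ε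
  have stepB : (∑' x, p x * TV (k x) (l x)) ≤ 2 * ε := by
    have hfac3 := (summable_prod_of_nonneg (fun a : α × β => abs_nonneg _)).mp hS3
    have hpt : ∀ x, p x * TV (k x) (l x)
        = (1/2) * ∑' y, |p x * k x y - p x * l x y| := by
      intro x
      rw [TV, ← mul_assoc, mul_comm (p x) ((1:ℝ)/2), mul_assoc, ← tsum_mul_left]
      congr 1
      refine tsum_congr fun y => ?_
      rw [← abs_of_nonneg (hp.1 x), ← abs_mul, abs_of_nonneg (hp.1 x), mul_sub]
    have hsum3 : (∑' x, p x * TV (k x) (l x))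
        = (1/2) * ∑' a : α × β, |p a.1 * k a.1 a.2 - p a.1 * l a.1 a.2| := by
      simp only [hpt]
      rw [tsum_mul_left, Summable.tsum_prod' hS3 hfac3.1]
    -- triangle inequality on the joints
    have htri : ∑' a : α × β, |p a.1 * k a.1 a.2 - p a.1 * l a.1 a.2|
        ≤ (∑' a : α × β, |p a.1 * k a.1 a.2 - q a.1 * l a.1 a.2|)
          + ∑' a : α × β, |q a.1 * l a.1 a.2 - p a.1 * l a.1 a.2| := by
      rw [← Summable.tsum_add hS1 hS2]
      refine Summable.tsum_le_tsum (fun a => ?_) hS3 (hS1.add hS2)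
      exact (abs_sub_le _ _ _)
    -- second term equals 2 * TV q p
    have heq2 : ∑' a : α × β, |q a.1 * l a.1 a.2 - p a.1 * l a.1 a.2|
        = ∑' x, |q x - p x| := by
      have hfac2 := (summable_prod_of_nonneg (fun a : α × β => abs_nonneg _)).mp hS2
      rw [Summable.tsum_prod' hS2 hfac2.1]
      congr 1; funext x
      have : ∀ y, |q x * l x y - p x * l x y| = |q x - p x| * l x y := by
        intro y
        rw [← sub_mul, abs_mul, abs_of_nonneg ((hl x).1 y)]
      simp only [this]
      rw [tsum_mul_left, (hl x).2.tsum_eq, mul_one]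
    have hTVqp : ∑' x, |q x - p x| = 2 * TV q p := by rw [TV]; ring
    rw [hsum3]
    have hεeq : ∑' a : α × β, |p a.1 * k a.1 a.2 - q a.1 * l a.1 a.2| = 2 * ε := by
      rw [hε, TV]; ring
    nlinarith [htri, heq2, hTVqp, stepA, hεeq]
  -- Step C : existence by contradiction
  by_contra hcon
  push_neg at hcon
  have hsummW : Summable fun x => p x * TV (k x) (l x) := by
    refine hp.2.summable.of_nonneg_of_le
      (fun x => mul_nonneg (hp.1 x) (tv_nonneg _ _)) (fun x => ?_)
    calc p x * TV (k x) (l x) ≤ p x * 1 :=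
          mul_le_mul_of_nonneg_left (tv_le_one (hk x) (hl x)) (hp.1 x)
      _ = p x := mul_one _
  have hx0 : ∃ x0, 0 < p x0 := by
    by_contra hno
    push_neg at hno
    have : ∀ x, p x = 0 := fun x => le_antisymm (hno x) (hp.1 x)
    have h1 := hp.2.tsum_eq
    simp only [this, tsum_zero] at h1
    norm_num at h1
  obtain ⟨x0, hx0⟩ := hx0
  have hstrict : ∀ x, p x * (2 * ε) ≤ p x * TV (k x) (l x) := by
    intro x
    rcases eq_or_lt_of_le (hp.1 x) with hz | hpos
    · rw [← hz]; simp
    · exact mul_le_mul_of_nonneg_left (hcon x hpos).le (hp.1 x)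
  have hone : (∑' x, p x * (2 * ε)) = 2 * ε := by
    rw [tsum_mul_right, hp.2.tsum_eq, one_mul]
  have hlt : (∑' x, p x * (2 * ε)) < ∑' x, p x * TV (k x) (l x) := by
    exact Summable.tsum_lt_tsum hstrict (mul_lt_mul_of_pos_left (hcon x0 hx0) hx0)
      (hp.2.summable.mul_right (2 * ε)) hsummW
  rw [hone] at hlt
  linarith [stepB, hlt]

end Aux

/-- Existence of good conditioning sequences (asymptotic version).  If the
total variation between the joint pmfs `p⁽ⁿ⁾ k⁽ⁿ⁾` and `q⁽ⁿ⁾ l⁽ⁿ⁾` tends to `0`, then there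
is a sequence of points `x⁽ⁿ⁾` with `p⁽ⁿ⁾(x⁽ⁿ⁾) > 0` along which the conditional pmfs
`k⁽ⁿ⁾(·|x⁽ⁿ⁾)` and `l⁽ⁿ⁾(·|x⁽ⁿ⁾)` become close in total variation. -/
theorem exists_good_conditioning_sequence
    {𝒳 𝒴 : ℕ → Type*} [∀ n, Countable (𝒳 n)] [∀ n, Countable (𝒴 n)]
    (p q : ∀ n, 𝒳 n → ℝ) (k l : ∀ n, 𝒳 n → 𝒴 n → ℝ)
    (hp : ∀ n, IsPmf (p n)) (hq : ∀ n, IsPmf (q n))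
    (hk : ∀ n x, IsPmf (k n x)) (hl : ∀ n x, IsPmf (l n x))
    (h : Tendsto
      (fun n => TV (fun a : 𝒳 n × 𝒴 n => p n a.1 * k n a.1 a.2)
        (fun a : 𝒳 n × 𝒴 n => q n a.1 * l n a.1 a.2)) atTop (𝓝 0)) :
    ∃ x : ∀ n, 𝒳 n, (∀ n, 0 < p n (x n)) ∧
      Tendsto (fun n => TV (k n (x n)) (l n (x n))) atTop (𝓝 0) := by
  have hch : ∀ n, ∃ x, 0 < p n x ∧ TV (k n x) (l n x) ≤
      2 * TV (fun a : 𝒳 n × 𝒴 n => p n a.1 * k n a.1 a.2)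
        (fun a : 𝒳 n × 𝒴 n => q n a.1 * l n a.1 a.2) :=
    fun n => exists_good_point (p n) (q n) (k n) (l n) (hp n) (hq n) (hk n) (hl n)
  choose x hx1 hx2 using hch
  refine ⟨x, hx1, ?_⟩
  have hlim : Tendsto (fun n => 2 * TV (fun a : 𝒳 n × 𝒴 n => p n a.1 * k n a.1 a.2)
      (fun a : 𝒳 n × 𝒴 n => q n a.1 * l n a.1 a.2)) atTop (𝓝 0) := by
    simpa using h.const_mul 2
  exact squeeze_zero (fun n => tv_nonneg _ _) hx2 hlim
end
end
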